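/- Let Φ be a quantum channel on d×d matrices. The Cesàro means (1/N) ∑_{n=1}^{N} Φⁿ converge as N → ∞ to a linear map 𝒫 which is a projection (𝒫² = 𝒫) onto the fixed-point space of Φ, satisfying Φ ∘ 𝒫 = 𝒫 ∘ Φ = 𝒫. -/

import Mathlib

open Matrix
open scoped ComplexOrder

/-- The algebra of `d × d` complex matrices. -/
abbrev Mat (d : ℕ) := Matrix (Fin d) (Fin d) ℂ

/-- A linear map on matrices is positive if it maps positive semidefinite matrices to
positive semidefinite matrices. -/
def IsPositiveMap {d : ℕ} (Φ : Module.End ℂ (Mat d)) : Prop :=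
  ∀ X : Mat d, X.PosSemidef → (Φ X).PosSemidef

/-- A linear map on matrices is trace-preserving. -/
def IsTracePreserving {d : ℕ} (Φ : Module.End ℂ (Mat d)) : Prop :=
  ∀ X : Mat d, (Φ X).trace = X.trace

/-- The block-wise application `(Φ ⊗ id_n)(X)` of `Φ` to a matrix on `ℂ^d ⊗ ℂ^n`. -/
def blockApply {d : ℕ} (Φ : Module.End ℂ (Mat d)) (n : ℕ)
    (X : Matrix (Fin d × Fin n) (Fin d × Fin n) ℂ) :
    Matrix (Fin d × Fin n) (Fin d × Fin n) ℂ :=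
  Matrix.of fun p q => Φ (Matrix.of fun i j => X (i, p.2) (j, q.2)) p.1 q.1

/-- Complete positivity: `Φ ⊗ id_n` is positive for every `n`. -/
def IsCompletelyPositive {d : ℕ} (Φ : Module.End ℂ (Mat d)) : Prop :=
  ∀ (n : ℕ) (X : Matrix (Fin d × Fin n) (Fin d × Fin n) ℂ),
    X.PosSemidef → (blockApply Φ n X).PosSemidef

/-- The attractor (peripheral) subspace: the span of eigenvectors corresponding to
eigenvalues of modulus one. -/
noncomputable def attrSubspace {d : ℕ} (Φ : Module.End ℂ (Mat d)) : Submodule ℂ (Mat d) :=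
  ⨆ (μ : ℂ) (_ : ‖μ‖ = 1), Module.End.eigenspace Φ μ

/-! ### Auxiliary lemmas -/

section Aux

lemma star_single' {d : ℕ} (k : Fin d) (c : ℂ) :
    star (Pi.single k c : Fin d → ℂ) = Pi.single k (starRingEnd ℂ c) := by
  ext l
  simp [Pi.star_apply, Pi.single_apply, apply_ite (starRingEnd ℂ)]

lemma psd_diag {d : ℕ} {M : Mat d} (hM : M.PosSemidef) (k : Fin d) :
    0 ≤ (M k k).re ∧ (M k k).im = 0 := by
  have h := hM.dotProduct_mulVec_nonneg (Pi.single k 1)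
  rw [Complex.nonneg_iff] at h
  have e : star (Pi.single k (1:ℂ)) ⬝ᵥ M *ᵥ Pi.single k (1:ℂ) = M k k := by
    simp [star_single', mulVec_single, single_dotProduct]
  rw [e] at h
  exact ⟨h.1, h.2.symm⟩

lemma psd_trace_re_nonneg {d : ℕ} {M : Mat d} (hM : M.PosSemidef) : 0 ≤ M.trace.re := by
  have htr : M.trace.re = ∑ k, (M k k).re := by
    simp [Matrix.trace, Matrix.diag, Complex.re_sum]
  rw [htr]
  exact Finset.sum_nonneg fun k _ => (psd_diag hM k).1

lemma psd_entry_le_trace {d : ℕ} {M : Mat d} (hM : M.PosSemidef) (i j : Fin d) :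
    ‖M i j‖ ≤ M.trace.re := by
  have hdiag := fun k => psd_diag hM k
  have htr : M.trace.re = ∑ k, (M k k).re := by
    simp [Matrix.trace, Matrix.diag, Complex.re_sum]
  by_cases hij : i = j
  · subst hij
    have : ‖M i i‖ = (M i i).re := by
      rw [Complex.norm_def, Complex.normSq_apply, (hdiag i).2]
      simpa using Real.sqrt_mul_self (hdiag i).1
    rw [this, htr]
    exact Finset.single_le_sum (fun k _ => (hdiag k).1) (Finset.mem_univ i)
  · by_cases hz0 : M i j = 0
    · rw [hz0]
      simpa using psd_trace_re_nonneg hM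
    set z := M i j with hz
    set c : ℂ := -(starRingEnd ℂ z) / ‖z‖ with hc
    have habs : (‖z‖ : ℂ) ≠ 0 := by
      simpa using hz0
    have hzz : starRingEnd ℂ z * z = (‖z‖ : ℂ) * ‖z‖ := by
      rw [mul_comm, Complex.mul_conj, Complex.normSq_eq_norm_sq]
      push_cast
      ring
    have hcc : starRingEnd ℂ c = -z / ‖z‖ := by
      rw [hc, map_div₀, map_neg, Complex.conj_conj, Complex.conj_ofReal]
    have hji : M j i = starRingEnd ℂ z := by
      rw [hz, ← hM.1.apply i j]
      simp
    have hform := hM.dotProduct_mulVec_nonneg (Pi.single i 1 + Pi.single j c)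
    have expand : star (Pi.single i (1:ℂ) + Pi.single j c) ⬝ᵥ
        M *ᵥ (Pi.single i (1:ℂ) + Pi.single j c)
        = M i i + M i j * c + starRingEnd ℂ c * M j i + (starRingEnd ℂ c * c) * M j j := by
      simp [star_add, star_single', mulVec_add, mulVec_single,
        add_dotProduct, dotProduct_add, single_dotProduct]
      ring
    rw [expand] at hform
    have h1 : M i j * c = -(‖z‖) := by
      rw [← hz, hc]
      field_simp
      linear_combination -1 * hzz
    have h2 : starRingEnd ℂ c * M j i = -(‖z‖) := by
      rw [hji, hcc]
      field_simp
      linear_combination -1 * hzz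
    have h3 : starRingEnd ℂ c * c = 1 := by
      rw [hcc, hc]
      field_simp
      linear_combination hzz
    rw [h1, h2, h3, one_mul, Complex.nonneg_iff] at hform
    have hre := hform.1
    simp only [Complex.add_re, Complex.neg_re, Complex.ofReal_re] at hre
    have hpair : (M i i).re + (M j j).re ≤ ∑ k, (M k k).re := by
      calc (M i i).re + (M j j).re = ∑ k ∈ ({i, j} : Finset (Fin d)), (M k k).re := by
            rw [Finset.sum_pair hij]
        _ ≤ ∑ k, (M k k).re :=
            Finset.sum_le_sum_of_subset_of_nonneg (Finset.subset_univ _)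
              (fun k _ _ => (hdiag k).1)
    rw [htr]
    nlinarith [norm_nonneg z]

/-- sum of absolute values of entries -/
noncomputable def entSum {d : ℕ} (H : Mat d) : ℝ := ∑ i, ∑ j, ‖H i j‖

lemma entSum_nonneg {d : ℕ} (H : Mat d) : 0 ≤ entSum H :=
  Finset.sum_nonneg fun _ _ => Finset.sum_nonneg fun _ _ => norm_nonneg _

lemma herm_shift_psd {d : ℕ} {H : Mat d} (hH : H.IsHermitian) :
    ((entSum H : ℂ) • (1 : Mat d) + H).PosSemidef := by
  set S := entSum H with hS
  refine Matrix.PosSemidef.of_dotProduct_mulVec_nonneg ?_ ?_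
  · show _ᴴ = _
    rw [conjTranspose_add, conjTranspose_smul, conjTranspose_one]
    rw [hH.eq]
    congr 1
    simp [Complex.star_def, Complex.conj_ofReal]
  · intro x
    set T : ℝ := ∑ k, Complex.normSq (x k) with hT
    have hT0 : 0 ≤ T := Finset.sum_nonneg fun k _ => Complex.normSq_nonneg _
    have hxk : ∀ k, ‖x k‖ ≤ Real.sqrt T := by
      intro k
      rw [show ‖x k‖ = Real.sqrt (Complex.normSq (x k)) from Complex.norm_def _]
      exact Real.sqrt_le_sqrt (Finset.single_le_sum
        (fun l _ => Complex.normSq_nonneg (x l)) (Finset.mem_univ k))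
    have hxkl : ∀ k l, ‖x k‖ * ‖x l‖ ≤ T := by
      intro k l
      calc ‖x k‖ * ‖x l‖
          ≤ Real.sqrt T * Real.sqrt T :=
            mul_le_mul (hxk k) (hxk l) (norm_nonneg _) (Real.sqrt_nonneg _)
        _ = T := Real.mul_self_sqrt hT0
    set Q : ℂ := star x ⬝ᵥ H *ᵥ x with hQdef
    have hQ : Q = ∑ k, ∑ l, (starRingEnd ℂ) (x k) * (H k l * x l) := by
      simp [hQdef, dotProduct, mulVec, Finset.mul_sum, Complex.star_def]
    have hQconj : (starRingEnd ℂ) Q = Q := by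
      rw [hQ, map_sum]
      rw [Finset.sum_comm]
      apply Finset.sum_congr rfl
      intro k _
      rw [map_sum]
      apply Finset.sum_congr rfl
      intro l _
      have h1 : (starRingEnd ℂ) (H k l) = H l k := hH.apply l k
      rw [_root_.map_mul, _root_.map_mul, Complex.conj_conj, h1]
      ring
    have hQim : Q.im = 0 := (Complex.conj_eq_iff_im.mp hQconj)
    have hQabs : ‖Q‖ ≤ S * T := by
      rw [hQ]
      calc ‖∑ k, ∑ l, (starRingEnd ℂ) (x k) * (H k l * x l)‖
          ≤ ∑ k, ‖∑ l, (starRingEnd ℂ) (x k) * (H k l * x l)‖ :=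
            norm_sum_le _ _
        _ ≤ ∑ k, ∑ l, ‖(starRingEnd ℂ) (x k) * (H k l * x l)‖ :=
            Finset.sum_le_sum fun k _ => norm_sum_le _ _
        _ ≤ ∑ k, ∑ l, ‖H k l‖ * T := by
            apply Finset.sum_le_sum
            intro k _
            apply Finset.sum_le_sum
            intro l _
            rw [norm_mul, norm_mul, Complex.norm_conj]
            calc ‖x k‖ * (‖H k l‖ * ‖x l‖)
                = ‖H k l‖ * (‖x k‖ * ‖x l‖) := by ring
              _ ≤ ‖H k l‖ * T :=
                  mul_le_mul_of_nonneg_left (hxkl k l) (norm_nonneg _)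
        _ = S * T := by simp [hS, entSum, Finset.sum_mul]
    have hform : star x ⬝ᵥ ((S : ℂ) • (1 : Mat d) + H) *ᵥ x = (S : ℂ) * (T : ℂ) + Q := by
      rw [Matrix.add_mulVec, dotProduct_add, Matrix.smul_mulVec, Matrix.one_mulVec]
      congr 1
      rw [dotProduct_smul]
      have : star x ⬝ᵥ x = (T : ℂ) := by
        rw [hT]
        push_cast
        simp [dotProduct, Complex.star_def, Complex.normSq_eq_conj_mul_self]
      rw [this, smul_eq_mul]
    rw [hform, Complex.nonneg_iff]
    constructor
    · simp only [Complex.add_re, Complex.mul_re, Complex.ofReal_re, Complex.ofReal_im]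
      have h2 : -(S*T) ≤ Q.re := by
        have := neg_abs_le Q.re
        nlinarith [Complex.abs_re_le_norm Q]
      nlinarith
    · simp [Complex.add_im, Complex.mul_im, hQim]

/-- Complete positivity implies positivity (take `n = 1`). -/
lemma isPositiveMap_of_CP {d : ℕ} {Φ : Module.End ℂ (Mat d)}
    (hCP : IsCompletelyPositive Φ) : IsPositiveMap Φ := by
  intro X hX
  set X' : Matrix (Fin d × Fin 1) (Fin d × Fin 1) ℂ :=
    X.submatrix Prod.fst Prod.fst with hX'def
  have hX' : X'.PosSemidef := hX.submatrix _
  have h := hCP 1 X' hX'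
  have key : Φ X = (blockApply Φ 1 X').submatrix
      (fun i : Fin d => (i, (0 : Fin 1))) (fun i : Fin d => (i, (0 : Fin 1))) := by
    ext i j
    show Φ X i j = blockApply Φ 1 X' (i, 0) (j, 0)
    simp only [blockApply, Matrix.of_apply]
    congr 1
  rw [key]
  exact h.submatrix _

/-- Entry bound for positive trace-preserving maps applied to a Hermitian matrix. -/
lemma herm_entry_bound {d : ℕ} {H : Mat d} (hH : H.IsHermitian)
    {Ψ : Module.End ℂ (Mat d)} (hP : IsPositiveMap Ψ) (hT : IsTracePreserving Ψ)
    (i j : Fin d) :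
    ‖Ψ H i j‖ ≤ 2 * entSum H * d + H.trace.re := by
  set S := entSum H with hSdef
  have hA : (Ψ ((S : ℂ) • (1 : Mat d) + H)).PosSemidef := hP _ (herm_shift_psd hH)
  have hB : (Ψ ((S : ℂ) • (1 : Mat d))).PosSemidef := by
    apply hP
    have hsm : ((S : ℂ) • (1 : Mat d)) = Matrix.diagonal (fun _ => (S : ℂ)) := by
      ext i j
      rcases eq_or_ne i j with h | h
      · simp [h, Matrix.smul_apply, Matrix.one_apply_eq, Matrix.diagonal_apply_eq]
      · simp [Matrix.smul_apply, Matrix.one_apply_ne h, Matrix.diagonal_apply_ne _ h]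
    rw [hsm]
    refine Matrix.PosSemidef.diagonal ?_
    intro i
    simpa using Complex.zero_le_real.mpr (entSum_nonneg H)
  have hsplit : Ψ H = Ψ ((S : ℂ) • (1 : Mat d) + H) - Ψ ((S : ℂ) • (1 : Mat d)) := by
    rw [map_add]
    abel
  have htrA : (Ψ ((S : ℂ) • (1 : Mat d) + H)).trace.re = S * d + H.trace.re := by
    rw [hT]
    rw [Matrix.trace_add, Matrix.trace_smul, Matrix.trace_one]
    simp [Complex.add_re, Complex.mul_re]
  have htrB : (Ψ ((S : ℂ) • (1 : Mat d))).trace.re = S * d := by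
    rw [hT]
    rw [Matrix.trace_smul, Matrix.trace_one]
    simp [Complex.mul_re]
  have hAij := psd_entry_le_trace hA i j
  have hBij := psd_entry_le_trace hB i j
  rw [htrA] at hAij
  rw [htrB] at hBij
  have : ‖Ψ H i j‖
      ≤ ‖Ψ ((S : ℂ) • (1 : Mat d) + H) i j‖
        + ‖Ψ ((S : ℂ) • (1 : Mat d)) i j‖ := by
    rw [hsplit]
    have : (Ψ ((S : ℂ) • (1 : Mat d) + H) - Ψ ((S : ℂ) • (1 : Mat d))) i j
        = Ψ ((S : ℂ) • (1 : Mat d) + H) i j + -(Ψ ((S : ℂ) • (1 : Mat d)) i j) := by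
      simp [Matrix.sub_apply, sub_eq_add_neg]
    rw [this]
    simpa using norm_add_le (Ψ ((S : ℂ) • (1 : Mat d) + H) i j)
      (-(Ψ ((S : ℂ) • (1 : Mat d)) i j))
  calc ‖Ψ H i j‖
      ≤ ‖Ψ ((S : ℂ) • (1 : Mat d) + H) i j‖
        + ‖Ψ ((S : ℂ) • (1 : Mat d)) i j‖ := this
    _ ≤ (S * d + H.trace.re) + S * d := add_le_add hAij hBij
    _ = 2 * S * d + H.trace.re := by ring

/-- Uniform entry bound over all positive trace-preserving maps. -/
lemma entry_bound {d : ℕ} (y : Mat d) : ∃ C : ℝ,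
    ∀ (Ψ : Module.End ℂ (Mat d)), IsPositiveMap Ψ → IsTracePreserving Ψ →
      ∀ i j, ‖Ψ y i j‖ ≤ C := by
  set H : Mat d := (1/2 : ℂ) • (y + yᴴ) with hHdef
  set K : Mat d := (-(Complex.I/2)) • (y - yᴴ) with hKdef
  have hH : H.IsHermitian := by
    show _ᴴ = _
    rw [hHdef, conjTranspose_smul, conjTranspose_add, conjTranspose_conjTranspose]
    rw [show star ((1:ℂ)/2) = (1:ℂ)/2 by simp]
    rw [add_comm]
  have hK : K.IsHermitian := by
    show _ᴴ = _
    rw [hKdef, conjTranspose_smul, conjTranspose_sub, conjTranspose_conjTranspose]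
    have hst : star (-(Complex.I/2)) = Complex.I/2 := by
      simp [Complex.star_def, map_div₀]
      ring
    rw [hst, ← neg_sub y yᴴ, smul_neg, ← neg_smul]
  have hy : y = H + Complex.I • K := by
    rw [hHdef, hKdef, smul_smul]
    have hsc : Complex.I * (-(Complex.I/2)) = (1/2 : ℂ) := by
      rw [mul_neg, mul_div_assoc', Complex.I_mul_I]
      norm_num
    rw [hsc]
    module
  refine ⟨(2 * entSum H * d + H.trace.re) + (2 * entSum K * d + K.trace.re), ?_⟩
  intro Ψ hP hT i j
  have hsplit : Ψ y = Ψ H + Complex.I • Ψ K := by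
    conv_lhs => rw [hy]
    rw [map_add]
    congr 1
    exact LinearMap.map_smul Ψ Complex.I K
  have h1 := herm_entry_bound hH hP hT i j
  have h2 := herm_entry_bound hK hP hT i j
  calc ‖Ψ y i j‖
      ≤ ‖Ψ H i j‖ + ‖Ψ K i j‖ := by
        rw [hsplit]
        have he : (Ψ H + Complex.I • Ψ K) i j = Ψ H i j + Complex.I * Ψ K i j := by
          simp [Matrix.add_apply, Matrix.smul_apply, smul_eq_mul]
        rw [he]
        calc ‖Ψ H i j + Complex.I * Ψ K i j‖
            ≤ ‖Ψ H i j‖ + ‖Complex.I * Ψ K i j‖ :=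
              norm_add_le _ _
          _ = ‖Ψ H i j‖ + ‖Ψ K i j‖ := by
              rw [norm_mul, Complex.norm_I, one_mul]
    _ ≤ _ := add_le_add h1 h2

lemma isPositiveMap_pow {d : ℕ} {Φ : Module.End ℂ (Mat d)}
    (h : IsPositiveMap Φ) (n : ℕ) : IsPositiveMap (Φ ^ n) := by
  induction n with
  | zero => intro X hX; simpa using hX
  | succ n ih =>
    intro X hX
    rw [pow_succ]
    exact ih _ (h X hX)

lemma isTracePreserving_pow {d : ℕ} {Φ : Module.End ℂ (Mat d)}
    (h : IsTracePreserving Φ) (n : ℕ) : IsTracePreserving (Φ ^ n) := by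
  induction n with
  | zero => intro X; simp
  | succ n ih =>
    intro X
    rw [pow_succ]
    exact (ih _).trans (h X)

end Aux

set_option maxHeartbeats 1000000 in
/-- For a quantum channel `Φ`, the Cesàro means `(1/N) ∑_{n=1}^N Φ^n`
converge (pointwise, in the finite-dimensional space of matrices) to a linear map `P`
which is a projection onto the fixed-point space of `Φ`, and `Φ ∘ P = P ∘ Φ = P`. -/
theorem cesaro_limit_projection_onto_fixedPoints
    (d : ℕ) (Φ : Module.End ℂ (Mat d))
    (hCP : IsCompletelyPositive Φ) (hTP : IsTracePreserving Φ) :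
    ∃ P : Module.End ℂ (Mat d),
      (∀ X : Mat d,
        Filter.Tendsto (fun N : ℕ => (N : ℂ)⁻¹ • (∑ n ∈ Finset.Icc 1 N, Φ ^ n) X)
          Filter.atTop (nhds (P X))) ∧
      P ∘ₗ P = P ∧
      LinearMap.range P = Module.End.eigenspace Φ 1 ∧
      Φ ∘ₗ P = P ∧ P ∘ₗ Φ = P := by
  classical
  have hpos : IsPositiveMap Φ := isPositiveMap_of_CP hCP
  -- the sequence (Φ^{N+1} y - Φ y)/N tends to 0 for every y
  have hzero : ∀ y : Mat d,
      Filter.Tendsto (fun N : ℕ => (N : ℂ)⁻¹ • ((Φ ^ (N + 1)) y - Φ y))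
        Filter.atTop (nhds 0) := by
    intro y
    obtain ⟨C, hC⟩ := entry_bound y
    refine tendsto_pi_nhds.mpr ?_
    intro i
    refine tendsto_pi_nhds.mpr ?_
    intro j
    simp only [Matrix.zero_apply]
    apply squeeze_zero_norm (a := fun N : ℕ => (2 * C) / N)
    · intro N
      have h1 : ‖(Φ ^ (N + 1)) y i j‖ ≤ C :=
        hC _ (isPositiveMap_pow hpos (N+1)) (isTracePreserving_pow hTP (N+1)) i j
      have h2 : ‖(Φ : Module.End ℂ (Mat d)) y i j‖ ≤ C := by
        have := hC (Φ ^ 1) (isPositiveMap_pow hpos 1) (isTracePreserving_pow hTP 1) i j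
        simpa using this
      have : ‖((N : ℂ)⁻¹ • ((Φ ^ (N + 1)) y - Φ y)) i j‖
          = (N : ℝ)⁻¹ * ‖((Φ ^ (N + 1)) y - Φ y) i j‖ := by
        simp [Matrix.smul_apply, norm_smul]
      rw [this]
      rw [div_eq_inv_mul]
      apply mul_le_mul_of_nonneg_left _ (by positivity)
      have : ((Φ ^ (N + 1)) y - Φ y) i j = (Φ ^ (N + 1)) y i j - Φ y i j := rfl
      rw [this]
      calc ‖(Φ ^ (N + 1)) y i j - Φ y i j‖
          ≤ ‖(Φ ^ (N + 1)) y i j‖ + ‖Φ y i j‖ := norm_sub_le _ _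
        _ ≤ C + C := add_le_add h1 h2
        _ = 2 * C := by ring
    · exact tendsto_const_div_atTop_nhds_zero_nat (2 * C)
  -- telescoping
  have htel : ∀ (y : Mat d) (N : ℕ),
      ∑ n ∈ Finset.Icc 1 N, (Φ ^ n) (Φ y - y) = (Φ ^ (N + 1)) y - Φ y := by
    intro y N
    induction N with
    | zero => simp
    | succ N ih =>
      rw [Finset.sum_Icc_succ_top (by omega : 1 ≤ N + 1), ih]
      have h3 : (Φ ^ (N + 1)) (Φ y - y) = (Φ ^ (N + 1 + 1)) y - (Φ ^ (N + 1)) y := by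
        rw [map_sub, pow_succ]
        rfl
      rw [h3]
      abel
  -- fixed points are preserved by powers
  have hfix_pow : ∀ (k : Mat d), Φ k = k → ∀ n, (Φ ^ n) k = k := by
    intro k hk n
    induction n with
    | zero => simp
    | succ n ih => rw [pow_succ]; show (Φ ^ n) (Φ k) = k; rw [hk]; exact ih
  set Kk : Submodule ℂ (Mat d) := LinearMap.ker (Φ - 1) with hKk
  set Rr : Submodule ℂ (Mat d) := LinearMap.range (Φ - 1) with hRr
  have hmemK : ∀ x, x ∈ Kk ↔ Φ x = x := by
    intro x
    rw [hKk, LinearMap.mem_ker, LinearMap.sub_apply, Module.End.one_apply, sub_eq_zero]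
  -- disjointness
  have hdisj : Disjoint Kk Rr := by
    rw [Submodule.disjoint_def]
    intro x hxK hxR
    obtain ⟨y, hy⟩ := hxR
    have hy' : Φ y - y = x := by
      rw [← hy]; rfl
    have hΦx : Φ x = x := (hmemK x).mp hxK
    have hconst : ∀ N : ℕ, 1 ≤ N → (N : ℂ)⁻¹ • ((Φ ^ (N + 1)) y - Φ y) = x := by
      intro N hN
      have hNne : (N : ℂ) ≠ 0 := by
        exact_mod_cast Nat.cast_ne_zero.mpr (by omega)
      have h1 : (Φ ^ (N + 1)) y - Φ y = (N : ℂ) • x := by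
        rw [← htel y N]
        have : ∀ n ∈ Finset.Icc 1 N, (Φ ^ n) (Φ y - y) = x := by
          intro n _
          rw [hy', hfix_pow x hΦx n]
        rw [Finset.sum_congr rfl this, Finset.sum_const, Nat.card_Icc,
          Nat.add_sub_cancel, ← Nat.cast_smul_eq_nsmul (R := ℂ)]
      rw [h1, smul_smul, inv_mul_cancel₀ hNne, one_smul]
    have htendx : Filter.Tendsto (fun _ : ℕ => x) Filter.atTop (nhds (0 : Mat d)) := by
      apply (hzero y).congr'
      filter_upwards [Filter.eventually_ge_atTop 1] with N hN
      exact hconst N hN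
    exact tendsto_nhds_unique tendsto_const_nhds htendx
  -- codisjointness via dimensions
  have hcompl : IsCompl Kk Rr := by
    refine ⟨hdisj, ?_⟩
    rw [codisjoint_iff]
    apply Submodule.eq_top_of_finrank_eq
    have h1 := Submodule.finrank_sup_add_finrank_inf_eq Kk Rr
    rw [disjoint_iff.mp hdisj] at h1
    simp only [finrank_bot, add_zero] at h1
    have h2 := LinearMap.finrank_range_add_finrank_ker (Φ - 1)
    rw [h1, ← hKk, ← hRr] at *
    omega
  set P : Module.End ℂ (Mat d) := Kk.subtype ∘ₗ Kk.projectionOnto Rr hcompl with hP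
  have hPmem : ∀ x, P x ∈ Kk := fun x => (Kk.projectionOnto Rr hcompl x).2
  have hPfixed : ∀ x ∈ Kk, P x = x := by
    intro x hx
    show (Kk.projectionOnto Rr hcompl x : Mat d) = x
    rw [show x = ((⟨x, hx⟩ : Kk) : Mat d) from rfl,
      Submodule.projectionOnto_apply_left hcompl ⟨x, hx⟩]
  have hPzero : ∀ x ∈ Rr, P x = 0 := by
    intro x hx
    show (Kk.projectionOnto Rr hcompl x : Mat d) = 0
    rw [(Submodule.projectionOnto_apply_eq_zero_iff hcompl).mpr hx]
    rfl
  refine ⟨P, ?_, ?_, ?_, ?_, ?_⟩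
  · -- convergence
    intro X
    set k : Mat d := P X with hk
    have hkK : k ∈ Kk := hPmem X
    have hΦk : Φ k = k := (hmemK k).mp hkK
    have hrR : X - k ∈ Rr := by
      have hself := Submodule.projection_add_projection_eq_self hcompl X
      have h2 : X - k = (Rr.projectionOnto Kk hcompl.symm X : Mat d) := by
        rw [hk]
        show X - (Kk.projectionOnto Rr hcompl X : Mat d) = _
        exact (eq_sub_of_add_eq' hself).symm
      rw [h2]
      exact (Rr.projectionOnto Kk hcompl.symm X).2
    obtain ⟨y, hy⟩ := hrR
    have hy' : Φ y - y = X - k := by rw [← hy]; rfl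
    have hsum : ∀ N : ℕ, 1 ≤ N →
        (N : ℂ)⁻¹ • (∑ n ∈ Finset.Icc 1 N, Φ ^ n) X
          = k + (N : ℂ)⁻¹ • ((Φ ^ (N + 1)) y - Φ y) := by
      intro N hN
      have hNne : (N : ℂ) ≠ 0 := by
        exact_mod_cast Nat.cast_ne_zero.mpr (by omega)
      have hXsplit : X = k + (Φ y - y) := by rw [hy']; abel
      have happ : (∑ n ∈ Finset.Icc 1 N, Φ ^ n) X
          = ∑ n ∈ Finset.Icc 1 N, (Φ ^ n) X := by
        rw [LinearMap.sum_apply]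
      rw [happ]
      have hterm : ∀ n ∈ Finset.Icc 1 N, (Φ ^ n) X = k + (Φ ^ n) (Φ y - y) := by
        intro n _
        conv_lhs => rw [hXsplit]
        rw [map_add, hfix_pow k hΦk n]
      rw [Finset.sum_congr rfl hterm, Finset.sum_add_distrib, Finset.sum_const,
        Nat.card_Icc, htel y N]
      simp only [Nat.add_sub_cancel]
      rw [smul_add]
      congr 1
      rw [← Nat.cast_smul_eq_nsmul ℂ N k, smul_smul, inv_mul_cancel₀ hNne, one_smul]
    have : Filter.Tendsto (fun N : ℕ => k + (N : ℂ)⁻¹ • ((Φ ^ (N + 1)) y - Φ y))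
        Filter.atTop (nhds (k + 0)) := by
      exact Filter.Tendsto.add tendsto_const_nhds (hzero y)
    rw [add_zero] at this
    apply this.congr'
    filter_upwards [Filter.eventually_ge_atTop 1] with N hN
    exact (hsum N hN).symm
  · -- P ∘ P = P
    refine LinearMap.ext fun X => ?_
    exact hPfixed (P X) (hPmem X)
  · -- range P = eigenspace
    have heig : Module.End.eigenspace Φ 1 = Kk := by
      ext x
      rw [Module.End.mem_eigenspace_iff, one_smul, hmemK]
    rw [heig]
    apply le_antisymm
    · rintro x ⟨y, rfl⟩
      exact hPmem y
    · intro x hx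
      exact ⟨x, hPfixed x hx⟩
  · -- Φ ∘ P = P
    refine LinearMap.ext fun X => ?_
    show Φ (P X) = P X
    exact (hmemK (P X)).mp (hPmem X)
  · -- P ∘ Φ = P
    refine LinearMap.ext fun X => ?_
    show P (Φ X) = P X
    have h1 : Φ X - X ∈ Rr := ⟨X, rfl⟩
    have : Φ X = X + (Φ X - X) := by abel
    rw [this, map_add, hPzero _ h1, add_zero]
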